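/- Let f be an entropy generator and γ ∈ ℝ, and suppose that for all probability distributions P, Q on ℕ one has ∑_{i,j} f(p_i·q_j) = ∑_i f(p_i) + ∑_j f(q_j) + γ·(∑_i f(p_i))·(∑_j f(q_j)). Then for all rational numbers q, r ∈ [0,1]: f(q·r) = q·f(r) + r·f(q) + γ·f(q)·f(r). -/

import Mathlib

/-- A probability distribution on ℕ: nonnegative weights summing to 1. -/
def IsProbDist (p : ℕ → ℝ) : Prop := (∀ i, 0 ≤ p i) ∧ HasSum p 1

/-- An entropy generator: real analytic on `[0,∞)`, strictly convex on `[0,∞)`,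
with `f 0 = f 1 = 0` and `f' 1 = 1`. -/
def IsEntropyGenerator (f : ℝ → ℝ) : Prop :=
  (∀ x ∈ Set.Ici (0 : ℝ), AnalyticAt ℝ f x) ∧
  StrictConvexOn ℝ (Set.Ici (0 : ℝ)) f ∧
  f 0 = 0 ∧ f 1 = 0 ∧ deriv f 1 = 1


noncomputable def d3 (p s : ℝ) : ℕ → ℝ :=
  fun i => if i = 0 then p else if i = 1 then s else if i = 2 then 1 - p - s else 0
noncomputable def u (N : ℕ) : ℕ → ℝ := fun i => if i < N then (N:ℝ)⁻¹ else 0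

lemma d3_prob (p s : ℝ) (hp : 0 ≤ p) (hs : 0 ≤ s) (hps : p + s ≤ 1) :
    IsProbDist (d3 p s) := by
  constructor
  · intro i
    simp only [d3]
    split_ifs <;> linarith
  · have h0 : ∀ b ∉ ({0,1,2} : Finset ℕ), d3 p s b = 0 := by
      intro b hb
      simp only [Finset.mem_insert, Finset.mem_singleton] at hb
      push_neg at hb
      simp [d3, hb.1, hb.2.1, hb.2.2]
    have := hasSum_sum_of_ne_finset_zero (L := SummationFilter.unconditional ℕ) h0
    convert this using 1
    simp [d3]

lemma u_prob (N : ℕ) (hN : 0 < N) : IsProbDist (u N) := by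
  constructor
  · intro i; simp only [u]; split_ifs <;> positivity
  · have h0 : ∀ b ∉ Finset.range N, u N b = 0 := by
      intro b hb; simp only [Finset.mem_range, not_lt] at hb; simp [u, Nat.not_lt.mpr hb]
    have hs := hasSum_sum_of_ne_finset_zero (L := SummationFilter.unconditional ℕ) h0
    have he : (∑ b ∈ Finset.range N, u N b) = 1 := by
      have h1 : ∀ i ∈ Finset.range N, u N i = (N:ℝ)⁻¹ :=
        fun i hi => by simp [u, Finset.mem_range.mp hi]
      rw [Finset.sum_congr rfl h1, Finset.sum_const, Finset.card_range, nsmul_eq_mul]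
      field_simp
    rwa [he] at hs

lemma tsum_d3 (f : ℝ → ℝ) (hf0 : f 0 = 0) (p s : ℝ) :
    (∑' i, f (d3 p s i)) = f p + f s + f (1 - p - s) := by
  have h0 : ∀ b ∉ ({0,1,2} : Finset ℕ), f (d3 p s b) = 0 := by
    intro b hb
    simp only [Finset.mem_insert, Finset.mem_singleton] at hb
    push_neg at hb
    simp [d3, hb.1, hb.2.1, hb.2.2, hf0]
  rw [tsum_eq_sum h0]
  simp [d3]
  ring

lemma tsum_u (f : ℝ → ℝ) (hf0 : f 0 = 0) (N : ℕ) :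
    (∑' j, f (u N j)) = N * f ((N:ℝ)⁻¹) := by
  have h0 : ∀ b ∉ Finset.range N, f (u N b) = 0 := by
    intro b hb; simp only [Finset.mem_range, not_lt] at hb; simp [u, Nat.not_lt.mpr hb, hf0]
  rw [tsum_eq_sum h0]
  have h1 : ∀ i ∈ Finset.range N, f (u N i) = f ((N:ℝ)⁻¹) :=
    fun i hi => by simp [u, Finset.mem_range.mp hi]
  rw [Finset.sum_congr rfl h1, Finset.sum_const, Finset.card_range, nsmul_eq_mul]

lemma tsum_prodd3 (f : ℝ → ℝ) (hf0 : f 0 = 0) (p s : ℝ) (N : ℕ) :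
    (∑' ij : ℕ × ℕ, f (d3 p s ij.1 * u N ij.2)) =
      N * f (p * (N:ℝ)⁻¹) + N * f (s * (N:ℝ)⁻¹) + N * f ((1 - p - s) * (N:ℝ)⁻¹) := by
  have h0 : ∀ b ∉ (({0,1,2} : Finset ℕ) ×ˢ Finset.range N), f (d3 p s b.1 * u N b.2) = 0 := by
    intro b hb
    rw [Finset.mem_product, not_and_or] at hb
    rcases hb with hb | hb
    · simp only [Finset.mem_insert, Finset.mem_singleton] at hb
      push_neg at hb
      simp [d3, hb.1, hb.2.1, hb.2.2, hf0]
    · simp only [Finset.mem_range, not_lt] at hb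
      simp [u, Nat.not_lt.mpr hb, hf0]
  rw [tsum_eq_sum h0, Finset.sum_product]
  have h1 : ∀ i ∈ ({0,1,2} : Finset ℕ), (∑ j ∈ Finset.range N, f (d3 p s i * u N j))
      = N * f (d3 p s i * (N:ℝ)⁻¹) := by
    intro i _
    have h2 : ∀ j ∈ Finset.range N, f (d3 p s i * u N j) = f (d3 p s i * (N:ℝ)⁻¹) :=
      fun j hj => by simp [u, Finset.mem_range.mp hj]
    rw [Finset.sum_congr rfl h2, Finset.sum_const, Finset.card_range, nsmul_eq_mul]
  rw [Finset.sum_congr rfl h1]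
  simp [d3]
  ring

lemma Lraw (f : ℝ → ℝ) (γ : ℝ) (hf0 : f 0 = 0) (hf1 : f 1 = 0)
    (h : ∀ p q : ℕ → ℝ, IsProbDist p → IsProbDist q →
      (∑' ij : ℕ × ℕ, f (p ij.1 * q ij.2)) =
        (∑' i, f (p i)) + (∑' j, f (q j))
          + γ * (∑' i, f (p i)) * (∑' j, f (q j)))
    (k M N : ℕ) (hM : 0 < M) (hN : 0 < N) (hk : k ≤ M) :
    (M:ℝ) * N * f ((k:ℝ)/((M:ℝ)*(N:ℝ))) =
      M * f ((k:ℝ)/M) + k * ((N:ℝ) * f ((N:ℝ)⁻¹))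
        + γ * ((M:ℝ) * f ((k:ℝ)/M)) * ((N:ℝ) * f ((N:ℝ)⁻¹)) := by
  have hM0 : (M:ℝ) ≠ 0 := Nat.cast_ne_zero.mpr hM.ne'
  have hN0 : (N:ℝ) ≠ 0 := Nat.cast_ne_zero.mpr hN.ne'
  have master : ∀ p s : ℝ, 0 ≤ p → 0 ≤ s → p + s ≤ 1 →
      (N:ℝ) * f (p * (N:ℝ)⁻¹) + N * f (s * (N:ℝ)⁻¹) + N * f ((1 - p - s) * (N:ℝ)⁻¹) =
        (f p + f s + f (1 - p - s)) + (N:ℝ) * f ((N:ℝ)⁻¹)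
          + γ * (f p + f s + f (1 - p - s)) * ((N:ℝ) * f ((N:ℝ)⁻¹)) := by
    intro p s hp hs hps
    have := h (d3 p s) (u N) (d3_prob p s hp hs hps) (u_prob N hN)
    rwa [tsum_d3 f hf0 p s, tsum_u f hf0 N, tsum_prodd3 f hf0 p s N] at this
  set S : ℝ := (N:ℝ) * f ((N:ℝ)⁻¹) with hS
  set G : ℝ → ℝ := fun x => (N:ℝ) * f (x * (N:ℝ)⁻¹) - f x - x * S - γ * f x * S with hG
  have hGadd : ∀ p s : ℝ, 0 ≤ p → 0 ≤ s → p + s ≤ 1 → G (p + s) = G p + G s := by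
    intro p s hp hs hps
    have e1 := master p s hp hs hps
    have e2 := master (p + s) 0 (by linarith) le_rfl (by linarith)
    rw [show (0:ℝ) * (N:ℝ)⁻¹ = 0 by ring, hf0,
      show (1:ℝ) - (p + s) - 0 = 1 - p - s by ring] at e2
    simp only [hG]
    linear_combination e2 - e1
  have hG0 : G 0 = 0 := by
    simp only [hG]
    rw [show (0:ℝ) * (N:ℝ)⁻¹ = 0 by ring, hf0]
    ring
  have hG1 : G 1 = 0 := by
    simp only [hG]
    rw [one_mul, hf1]
    ring
  have keyind : ∀ j : ℕ, j ≤ M → G ((j:ℝ)/M) = j * G ((M:ℝ)⁻¹) := by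
    intro j
    induction j with
    | zero =>
      intro _
      norm_num [hG0]
    | succ i ih =>
      intro hle
      have hi : i ≤ M := le_of_lt (Nat.lt_of_succ_le hle)
      have h1 : ((i + 1 : ℕ):ℝ)/M = (i:ℝ)/M + (M:ℝ)⁻¹ := by
        push_cast
        field_simp
      have h2 : (i:ℝ)/M + (M:ℝ)⁻¹ ≤ 1 := by
        rw [← h1]
        rw [div_le_one (by positivity)]
        exact_mod_cast hle
      rw [h1, hGadd _ _ (by positivity) (by positivity) h2, ih hi]
      push_cast
      ring
  have hGM : G ((M:ℝ)⁻¹) = 0 := by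
    have hMM := keyind M le_rfl
    rw [div_self hM0, hG1] at hMM
    rcases mul_eq_zero.mp hMM.symm with hc | hc
    · exact absurd hc hM0
    · exact hc
  have hGk : G ((k:ℝ)/M) = 0 := by rw [keyind k hk, hGM, mul_zero]
  simp only [hG] at hGk
  have harg : (k:ℝ)/((M:ℝ)*(N:ℝ)) = ((k:ℝ)/M) * (N:ℝ)⁻¹ := by
    rw [← div_eq_mul_inv, div_div]
  have e : (k:ℝ)/M * M = k := div_mul_cancel₀ _ hM0
  rw [harg]
  linear_combination (M:ℝ) * hGk + S * e

lemma gv_ne (f : ℝ → ℝ) (γ : ℝ) (hf0 : f 0 = 0) (hf1 : f 1 = 0)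
    (hconv : StrictConvexOn ℝ (Set.Ici (0:ℝ)) f)
    (h : ∀ p q : ℕ → ℝ, IsProbDist p → IsProbDist q →
      (∑' ij : ℕ × ℕ, f (p ij.1 * q ij.2)) =
        (∑' i, f (p i)) + (∑' j, f (q j))
          + γ * (∑' i, f (p i)) * (∑' j, f (q j)))
    (k : ℕ) (hk : 0 < k) : (1:ℝ) + γ * ((k:ℝ) * f ((k:ℝ)⁻¹)) ≠ 0 := by
  intro hC
  by_cases hγ : γ = 0
  · rw [hγ] at hC; norm_num at hC
  · have L := Lraw f γ hf0 hf1 h 1 2 k (by norm_num) hk (by norm_num)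
    push_cast at L
    have hk0 : (k:ℝ) ≠ 0 := Nat.cast_ne_zero.mpr hk.ne'
    have harg : (1:ℝ)/(2*(k:ℝ)) = (1/2) * ((k:ℝ)⁻¹) := by
      rw [one_div, mul_inv]; ring
    rw [harg] at L
    have hC' : γ * ((k:ℝ) * f ((k:ℝ)⁻¹)) = -1 := by linarith
    have h2 : (2:ℝ)*(k:ℝ) ≠ 0 := by positivity
    have hhalf : f ((1/2:ℝ) * (k:ℝ)⁻¹) = (1/2) * f ((k:ℝ)⁻¹) := by
      have hkey : ((2:ℝ)*(k:ℝ)) * f ((1/2:ℝ) * (k:ℝ)⁻¹)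
          = ((2:ℝ)*(k:ℝ)) * ((1/2) * f ((k:ℝ)⁻¹)) := by
        linear_combination L + 2 * f ((1:ℝ)/2) * hC'
      exact mul_left_cancel₀ h2 hkey
    have hne : (0:ℝ) ≠ (k:ℝ)⁻¹ := by
      have : (0:ℝ) < (k:ℝ)⁻¹ := by positivity
      exact this.ne
    have hcx := hconv.2 (Set.mem_Ici.mpr le_rfl)
      (Set.mem_Ici.mpr (by positivity : (0:ℝ) ≤ (k:ℝ)⁻¹)) hne
      (by norm_num : (0:ℝ) < 1/2) (by norm_num : (0:ℝ) < 1/2) (by norm_num)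
    simp only [smul_eq_mul] at hcx
    rw [show (1/2:ℝ)*0 + (1/2)*(k:ℝ)⁻¹ = (1/2)*(k:ℝ)⁻¹ by ring, hf0] at hcx
    linarith

theorem stmt3 (f : ℝ → ℝ) (hf : IsEntropyGenerator f) (γ : ℝ)
    (h : ∀ p q : ℕ → ℝ, IsProbDist p → IsProbDist q →
      (∑' ij : ℕ × ℕ, f (p ij.1 * q ij.2)) =
        (∑' i, f (p i)) + (∑' j, f (q j))
          + γ * (∑' i, f (p i)) * (∑' j, f (q j))) :
    ∀ q r : ℚ, 0 ≤ q → q ≤ 1 → 0 ≤ r → r ≤ 1 →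
      f ((q : ℝ) * (r : ℝ)) =
        (q : ℝ) * f (r : ℝ) + (r : ℝ) * f (q : ℝ) + γ * f (q : ℝ) * f (r : ℝ) := by
  obtain ⟨-, hconv, hf0, hf1, -⟩ := hf
  intro q r hq0 hq1 hr0 hr1
  set a : ℕ := q.num.toNat with ha_def
  set n : ℕ := q.den with hn_def
  set b : ℕ := r.num.toNat with hb_def
  set m : ℕ := r.den with hm_def
  have hn : 0 < n := q.pos
  have hm : 0 < m := r.pos
  have hn0 : (n:ℝ) ≠ 0 := Nat.cast_ne_zero.mpr hn.ne'
  have hm0 : (m:ℝ) ≠ 0 := Nat.cast_ne_zero.mpr hm.ne'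
  have hnuma : ((a:ℤ):ℝ) = ((q.num:ℤ):ℝ) := by
    exact_mod_cast congrArg (fun z : ℤ => (z:ℝ)) (Int.toNat_of_nonneg (Rat.num_nonneg.mpr hq0))
  have hq' : (q:ℝ) = (a:ℝ)/(n:ℝ) := by
    rw [Rat.cast_def]
    push_cast at hnuma ⊢
    rw [hnuma]
  have hnumb : ((b:ℤ):ℝ) = ((r.num:ℤ):ℝ) := by
    exact_mod_cast congrArg (fun z : ℤ => (z:ℝ)) (Int.toNat_of_nonneg (Rat.num_nonneg.mpr hr0))
  have hr' : (r:ℝ) = (b:ℝ)/(m:ℝ) := by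
    rw [Rat.cast_def]
    push_cast at hnumb ⊢
    rw [hnumb]
  have hale : a ≤ n := by
    have h1 : (a:ℝ)/(n:ℝ) ≤ 1 := by rw [← hq']; exact_mod_cast hq1
    have h2 : (a:ℝ) ≤ (n:ℝ) := by
      rw [div_le_one (by positivity)] at h1; exact h1
    exact_mod_cast h2
  have hble : b ≤ m := by
    have h1 : (b:ℝ)/(m:ℝ) ≤ 1 := by rw [← hr']; exact_mod_cast hr1
    have h2 : (b:ℝ) ≤ (m:ℝ) := by
      rw [div_le_one (by positivity)] at h1; exact h1
    exact_mod_cast h2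
  by_cases ha : a = 0
  · have : (q:ℝ) = 0 := by rw [hq', ha]; norm_num
    rw [this]
    simp [hf0]
  by_cases hb : b = 0
  · have : (r:ℝ) = 0 := by rw [hr', hb]; norm_num
    rw [this]
    simp [hf0]
  have hap : 0 < a := Nat.pos_of_ne_zero ha
  have hbp : 0 < b := Nat.pos_of_ne_zero hb
  have ha0 : (a:ℝ) ≠ 0 := Nat.cast_ne_zero.mpr ha
  have hb0 : (b:ℝ) ≠ 0 := Nat.cast_ne_zero.mpr hb
  -- the five key identities
  have L1 := Lraw f γ hf0 hf1 h a n a hn hap hale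
  rw [show (a:ℝ)/((n:ℝ)*(a:ℝ)) = (n:ℝ)⁻¹ by field_simp] at L1
  have L2 := Lraw f γ hf0 hf1 h b m b hm hbp hble
  rw [show (b:ℝ)/((m:ℝ)*(b:ℝ)) = (m:ℝ)⁻¹ by field_simp] at L2
  have L3 := Lraw f γ hf0 hf1 h 1 n m hn hm hn
  push_cast at L3
  rw [show (1:ℝ)/((n:ℝ)*(m:ℝ)) = ((n:ℝ)*(m:ℝ))⁻¹ from one_div _,
    show (1:ℝ)/(n:ℝ) = (n:ℝ)⁻¹ from one_div _] at L3
  have L4 := Lraw f γ hf0 hf1 h 1 a b hap hbp hap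
  push_cast at L4
  rw [show (1:ℝ)/((a:ℝ)*(b:ℝ)) = ((a:ℝ)*(b:ℝ))⁻¹ from one_div _,
    show (1:ℝ)/(a:ℝ) = (a:ℝ)⁻¹ from one_div _] at L4
  have L5 := Lraw f γ hf0 hf1 h (a*b) (n*m) (a*b) (Nat.mul_pos hn hm)
    (Nat.mul_pos hap hbp) (Nat.mul_le_mul hale hble)
  push_cast at L5
  rw [show ((a:ℝ)*(b:ℝ))/(((n:ℝ)*(m:ℝ))*((a:ℝ)*(b:ℝ))) = ((n:ℝ)*(m:ℝ))⁻¹ by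
    field_simp] at L5
  rw [hq', hr', div_mul_div_comm]
  by_cases hγ : γ = 0
  · have hT : ((n:ℝ)*(m:ℝ)) * f (((a:ℝ)*(b:ℝ))/((n:ℝ)*(m:ℝ)))
        = ((b:ℝ)*(n:ℝ)) * f ((a:ℝ)/(n:ℝ)) + ((a:ℝ)*(m:ℝ)) * f ((b:ℝ)/(m:ℝ)) := by
      rw [hγ] at L1 L2 L3 L4 L5
      linear_combination (b:ℝ)*L1 + (a:ℝ)*L2 + (a:ℝ)*(b:ℝ)*L3 - (a:ℝ)*(b:ℝ)*L4 - L5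
    rw [hγ]
    field_simp
    linear_combination hT
  · have hGA : (1:ℝ) + γ * ((a:ℝ) * f ((a:ℝ)⁻¹)) ≠ 0 := gv_ne f γ hf0 hf1 hconv h a hap
    have hGB : (1:ℝ) + γ * ((b:ℝ) * f ((b:ℝ)⁻¹)) ≠ 0 := gv_ne f γ hf0 hf1 hconv h b hbp
    have hmull :
        ((a:ℝ)*(b:ℝ) + γ*(((n:ℝ)*(m:ℝ)) * f (((a:ℝ)*(b:ℝ))/((n:ℝ)*(m:ℝ)))))
            * (((1:ℝ) + γ * ((a:ℝ) * f ((a:ℝ)⁻¹))) * ((1:ℝ) + γ * ((b:ℝ) * f ((b:ℝ)⁻¹))))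
          = (((a:ℝ) + γ*((n:ℝ) * f ((a:ℝ)/(n:ℝ)))) * ((b:ℝ) + γ*((m:ℝ) * f ((b:ℝ)/(m:ℝ)))))
            * (((1:ℝ) + γ * ((a:ℝ) * f ((a:ℝ)⁻¹))) * ((1:ℝ) + γ * ((b:ℝ) * f ((b:ℝ)⁻¹)))) := by
      linear_combination
        (-((a:ℝ)*(b:ℝ) + γ*(((n:ℝ)*(m:ℝ)) * f (((a:ℝ)*(b:ℝ))/((n:ℝ)*(m:ℝ)))))*γ) * L4
        - γ * L5 + ((a:ℝ)*(b:ℝ)*γ) * L3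
        + ((b:ℝ) * ((1:ℝ) + γ * ((m:ℝ) * f ((m:ℝ)⁻¹))) * γ) * L1
        + (((a:ℝ) + γ*((n:ℝ) * f ((a:ℝ)/(n:ℝ)))) * ((1:ℝ) + γ * ((a:ℝ) * f ((a:ℝ)⁻¹))) * γ) * L2
    have hGR := mul_right_cancel₀ (mul_ne_zero hGA hGB) hmull
    have h2 : γ * (((n:ℝ)*(m:ℝ)) * f (((a:ℝ)*(b:ℝ))/((n:ℝ)*(m:ℝ))))
        = γ * (((a:ℝ)*(m:ℝ)) * f ((b:ℝ)/(m:ℝ)) + ((b:ℝ)*(n:ℝ)) * f ((a:ℝ)/(n:ℝ))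
            + γ * (((n:ℝ) * f ((a:ℝ)/(n:ℝ))) * ((m:ℝ) * f ((b:ℝ)/(m:ℝ))))) := by
      linear_combination hGR
    have h3 := mul_left_cancel₀ hγ h2
    field_simp
    linear_combination h3
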